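/- Let f : (ℝ^{n×n})^g → ℝ and ζ : ℝ^{n×n} → ℝ be differentiable, let B, B₁, …, B_g ∈ ℝ^{n×n} be pairwise distinct matrices, and let λ₁, …, λ_g ∈ ℝ be such that for each i the partial gradient of f in its i-th argument at (B₁,…,B_g) equals λ_i ∇ζ(B_i). Then there exists a polynomial function ψ : ℝ^{n×n} → ℝ such that for every i, ψ(B_i) = ψ(B) and ∇ψ(B_i) = ∇ζ(B_i); consequently (B₁,…,B_g) together with the multipliers (λ₁,…,λ_g) is a KKT pair of the constrained problem min f(B₁,…,B_g) subject to ψ(B_i) = ψ(B) for all i = 1,…,g (Proposition 1). -/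

import Mathlib

open Finset

namespace Stmt6Aux

variable {n : ℕ}

abbrev E (n : ℕ) := Fin n → Fin n → ℝ

def IsPolyFun (h : E n → ℝ) : Prop :=
  ∃ p : MvPolynomial (Fin n × Fin n) ℝ,
    ∀ X : E n, h X = MvPolynomial.eval (fun q => X q.1 q.2) p

lemma IsPolyFun.const (c : ℝ) : IsPolyFun (fun _ : E n => c) :=
  ⟨MvPolynomial.C c, by simp⟩

lemma IsPolyFun.coord (p q : Fin n) : IsPolyFun (fun X : E n => X p q) :=
  ⟨MvPolynomial.X (p, q), by simp⟩

lemma IsPolyFun.add {h₁ h₂ : E n → ℝ} (H₁ : IsPolyFun h₁) (H₂ : IsPolyFun h₂) :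
    IsPolyFun (fun X => h₁ X + h₂ X) := by
  obtain ⟨p₁, hp₁⟩ := H₁; obtain ⟨p₂, hp₂⟩ := H₂
  exact ⟨p₁ + p₂, fun X => by simp [hp₁, hp₂]⟩

lemma IsPolyFun.mul {h₁ h₂ : E n → ℝ} (H₁ : IsPolyFun h₁) (H₂ : IsPolyFun h₂) :
    IsPolyFun (fun X => h₁ X * h₂ X) := by
  obtain ⟨p₁, hp₁⟩ := H₁; obtain ⟨p₂, hp₂⟩ := H₂
  exact ⟨p₁ * p₂, fun X => by simp [hp₁, hp₂]⟩

lemma IsPolyFun.sub {h₁ h₂ : E n → ℝ} (H₁ : IsPolyFun h₁) (H₂ : IsPolyFun h₂) :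
    IsPolyFun (fun X => h₁ X - h₂ X) := by
  obtain ⟨p₁, hp₁⟩ := H₁; obtain ⟨p₂, hp₂⟩ := H₂
  exact ⟨p₁ - p₂, fun X => by simp [hp₁, hp₂]⟩

lemma IsPolyFun.sum {ι : Type*} (s : Finset ι) (h : ι → E n → ℝ)
    (H : ∀ i ∈ s, IsPolyFun (h i)) : IsPolyFun (fun X => ∑ i ∈ s, h i X) := by
  classical
  induction s using Finset.induction_on with
  | empty => simpa using IsPolyFun.const (n := n) 0
  | insert _ _ hni ih =>
    rename_i a s
    simp only [Finset.sum_insert hni]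
    exact (H a (mem_insert_self a s)).add (ih fun i hi => H i (mem_insert_of_mem hi))

lemma IsPolyFun.prod {ι : Type*} (s : Finset ι) (h : ι → E n → ℝ)
    (H : ∀ i ∈ s, IsPolyFun (h i)) : IsPolyFun (fun X => ∏ i ∈ s, h i X) := by
  classical
  induction s using Finset.induction_on with
  | empty => simpa using IsPolyFun.const (n := n) 1
  | insert _ _ hni ih =>
    rename_i a s
    simp only [Finset.prod_insert hni]
    exact (H a (mem_insert_self a s)).mul (ih fun i hi => H i (mem_insert_of_mem hi))

lemma pi_repr (X : E n) :
    X = ∑ p : Fin n, ∑ q : Fin n, X p q • (Pi.single p (Pi.single q (1:ℝ)) : E n) := by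
  funext p' q'
  rw [Finset.sum_apply, Finset.sum_apply]
  simp only [Finset.sum_apply, Pi.single_apply, smul_ite, smul_zero, smul_eq_mul, mul_one]
  rw [Finset.sum_comm]
  simp [Pi.single_apply, ite_apply, mul_ite, Finset.sum_ite_eq]

lemma IsPolyFun.clm (L : E n →L[ℝ] ℝ) : IsPolyFun (fun X : E n => L X) := by
  have key : ∀ X : E n,
      L X = ∑ p : Fin n, ∑ q : Fin n, X p q * L ((Pi.single p (Pi.single q (1:ℝ)) : E n)) := by
    intro X
    conv_lhs => rw [pi_repr X]
    simp [map_sum, smul_eq_mul]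
  have : IsPolyFun (fun X : E n =>
      ∑ p : Fin n, ∑ q : Fin n, X p q * L ((Pi.single p (Pi.single q (1:ℝ)) : E n))) := by
    refine IsPolyFun.sum _ _ fun p _ => IsPolyFun.sum _ _ fun q _ => ?_
    exact (IsPolyFun.coord p q).mul (IsPolyFun.const _)
  obtain ⟨p, hp⟩ := this
  exact ⟨p, fun X => by simp only []; rw [key X]; exact hp X⟩

/-! ### Analytic layer -/

noncomputable def coordCLM (p q : Fin n) : E n →L[ℝ] ℝ :=
  (ContinuousLinearMap.proj q).comp (ContinuousLinearMap.proj (R := ℝ) (φ := fun _ : Fin n => Fin n → ℝ) p)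

@[simp] lemma coordCLM_apply (p q : Fin n) (X : E n) : coordCLM p q X = X p q := rfl

/-- Sum-of-squares distance polynomial. -/
def Q (a : E n) (x : E n) : ℝ := ∑ pq : Fin n × Fin n, (x pq.1 pq.2 - a pq.1 pq.2) ^ 2

lemma isPolyFun_Q (a : E n) : IsPolyFun (Q a) := by
  refine IsPolyFun.sum _ _ fun pq _ => ?_
  have : IsPolyFun (fun X : E n => X pq.1 pq.2 - a pq.1 pq.2) :=
    (IsPolyFun.coord pq.1 pq.2).sub (IsPolyFun.const _)
  simpa [sq] using this.mul this

lemma hasFDerivAt_Q (a y : E n) :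
    HasFDerivAt (Q a) (∑ pq : Fin n × Fin n,
      (2 * (y pq.1 pq.2 - a pq.1 pq.2)) • coordCLM pq.1 pq.2) y := by
  refine HasFDerivAt.fun_sum fun pq _ => ?_
  have h1 : HasFDerivAt (fun x : E n => x pq.1 pq.2 - a pq.1 pq.2) (coordCLM pq.1 pq.2) y :=
    (coordCLM pq.1 pq.2).hasFDerivAt.sub_const _
  have := h1.fun_mul h1
  have h2 : HasFDerivAt (fun x : E n => (x pq.1 pq.2 - a pq.1 pq.2) ^ 2)
      ((y pq.1 pq.2 - a pq.1 pq.2) • coordCLM pq.1 pq.2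
        + (y pq.1 pq.2 - a pq.1 pq.2) • coordCLM pq.1 pq.2) y := by
    simpa [sq] using this
  rw [two_mul, add_smul]
  exact h2

lemma differentiable_Q (a : E n) : Differentiable ℝ (Q a) :=
  fun y => (hasFDerivAt_Q a y).differentiableAt

lemma Q_self (a : E n) : Q a a = 0 := by simp [Q]

lemma hasFDerivAt_Q_self (a : E n) : HasFDerivAt (Q a) (0 : E n →L[ℝ] ℝ) a := by
  have := hasFDerivAt_Q a a
  simpa using this

lemma Q_ne_zero {a x : E n} (h : x ≠ a) : Q a x ≠ 0 := by
  intro h0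
  apply h
  have hnn : ∀ pq ∈ (univ : Finset (Fin n × Fin n)),
      (0:ℝ) ≤ (x pq.1 pq.2 - a pq.1 pq.2) ^ 2 := fun pq _ => sq_nonneg _
  have := (Finset.sum_eq_zero_iff_of_nonneg hnn).1 h0
  funext p q
  have h2 := this (p, q) (mem_univ _)
  have := pow_eq_zero_iff (n := 2) (by norm_num) |>.1 h2
  linarith [sub_eq_zero.1 this]

/-- `h` vanishes to second order at `y`. -/
def ZeroAt (h : E n → ℝ) (y : E n) : Prop := h y = 0 ∧ HasFDerivAt h (0 : E n →L[ℝ] ℝ) y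

lemma ZeroAt.mul {f g : E n → ℝ} {y : E n} (hf : ZeroAt f y)
    (hg : DifferentiableAt ℝ g y) : ZeroAt (fun x => f x * g x) y := by
  refine ⟨by simp [hf.1], ?_⟩
  have := hf.2.fun_mul hg.hasFDerivAt
  simpa [hf.1] using this

lemma zeroAt_Q (a : E n) : ZeroAt (Q a) a := ⟨Q_self a, hasFDerivAt_Q_self a⟩

lemma ZeroAt.prod {ι : Type*} [DecidableEq ι] {s : Finset ι} {f : ι → E n → ℝ} {y : E n}
    {j : ι} (hj : j ∈ s) (hZ : ZeroAt (f j) y)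
    (hd : ∀ i ∈ s, DifferentiableAt ℝ (f i) y) :
    ZeroAt (fun x => ∏ i ∈ s, f i x) y := by
  have hrw : (fun x => ∏ i ∈ s, f i x) = fun x => f j x * ∏ i ∈ s.erase j, f i x := by
    funext x; exact (Finset.mul_prod_erase s (fun i => f i x) hj).symm
  rw [hrw]
  refine hZ.mul ?_
  exact (HasFDerivAt.finset_prod fun i hi =>
    (hd i (Finset.mem_of_mem_erase hi)).hasFDerivAt).differentiableAt

lemma zeroAt_sq {f : E n → ℝ} {y : E n} (h0 : f y = 0) (hd : DifferentiableAt ℝ f y)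
    (c : ℝ) : ZeroAt (fun x => (c * f x) ^ 2) y := by
  have h1 : DifferentiableAt ℝ (fun x => c * f x) y := hd.const_mul c
  have hZ : HasFDerivAt (fun x => (c * f x) * (c * f x)) (0 : E n →L[ℝ] ℝ) y := by
    have := h1.hasFDerivAt.fun_mul h1.hasFDerivAt
    simpa [h0] using this
  refine ⟨by simp [h0], ?_⟩
  simp only [pow_two]
  exact hZ

end Stmt6Aux

open Stmt6Aux

/-- Proposition 1: if at `(B₁,…,B_g)` the partial gradient of `f` in its `i`-th argument equals
`λ_i ∇ζ(B_i)` for each `i`, then there is a polynomial function `ψ : ℝ^{n×n} → ℝ` with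
`ψ(B_i) = ψ(B)` and `∇ψ(B_i) = ∇ζ(B_i)` for all `i`, so that `(B₁,…,B_g)` together with
`(λ₁,…,λ_g)` is a KKT pair of `min f` subject to `ψ(B_i) = ψ(B)` for all `i`. -/
theorem stmt_6 (n gg : ℕ)
    (f : (Fin gg → (Fin n → Fin n → ℝ)) → ℝ) (hf : Differentiable ℝ f)
    (ζ : (Fin n → Fin n → ℝ) → ℝ) (hζ : Differentiable ℝ ζ)
    (B : Fin n → Fin n → ℝ) (Bv : Fin gg → (Fin n → Fin n → ℝ))
    (hdist : (∀ i j : Fin gg, i ≠ j → Bv i ≠ Bv j) ∧ ∀ i : Fin gg, Bv i ≠ B)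
    (lam : Fin gg → ℝ)
    (hstat : ∀ i : Fin gg,
      fderiv ℝ (fun X => f (Function.update Bv i X)) (Bv i) = lam i • fderiv ℝ ζ (Bv i)) :
    ∃ ψ : (Fin n → Fin n → ℝ) → ℝ,
      (∃ p : MvPolynomial (Fin n × Fin n) ℝ,
        ∀ X : Fin n → Fin n → ℝ, ψ X = MvPolynomial.eval (fun q => X q.1 q.2) p) ∧
      (∀ i : Fin gg, ψ (Bv i) = ψ B) ∧
      (∀ i : Fin gg, fderiv ℝ ψ (Bv i) = fderiv ℝ ζ (Bv i)) ∧
      (∀ i : Fin gg,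
        fderiv ℝ (fun X => f (Function.update Bv i X)) (Bv i)
          - lam i • fderiv ℝ ψ (Bv i) = 0) := by
  classical
  obtain ⟨hdist1, hdist2⟩ := hdist
  let a : Fin (gg + 1) → (Fin n → Fin n → ℝ) := Fin.cases B Bv
  have ha0 : a 0 = B := rfl
  have has : ∀ i : Fin gg, a i.succ = Bv i := fun i => by simp [a]
  have hane : ∀ (i : Fin gg) (j : Fin (gg + 1)), j ≠ i.succ → a j ≠ Bv i := by
    intro i j hj
    induction j using Fin.cases with
    | zero => rw [ha0]; exact fun h => hdist2 i h.symm
    | succ k =>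
      have hk : k ≠ i := fun h => hj (by rw [h])
      rw [has k]; exact hdist1 k i hk
  let S : Fin gg → Finset (Fin (gg + 1)) := fun i => Finset.univ.erase i.succ
  let P : Fin gg → (Fin n → Fin n → ℝ) → ℝ := fun i x => ∏ j ∈ S i, Q (a j) x
  have hPdiff : ∀ i y, DifferentiableAt ℝ (P i) y := fun i y =>
    (HasFDerivAt.finset_prod fun j _ => hasFDerivAt_Q (a j) y).differentiableAt
  let c : Fin gg → ℝ := fun i => P i (Bv i)
  have hc : ∀ i, c i ≠ 0 := by
    intro i
    refine Finset.prod_ne_zero_iff.2 fun j hj => ?_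
    exact Q_ne_zero (Ne.symm (hane i j (Finset.ne_of_mem_erase hj)))
  let M : Fin gg → (Fin n → Fin n → ℝ) → ℝ := fun i x => ((c i)⁻¹ * P i x) ^ 2
  have hMdiff : ∀ i y, DifferentiableAt ℝ (M i) y := fun i y =>
    ((hPdiff i y).const_mul (c i)⁻¹).pow 2
  have hM1 : ∀ i, M i (Bv i) = 1 := fun i => by
    simp only [M]
    rw [inv_mul_cancel₀ (hc i), one_pow]
  have hZP : ∀ (i : Fin gg) (k : Fin (gg + 1)), k ≠ i.succ → ZeroAt (P i) (a k) := by
    intro i k hk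
    exact ZeroAt.prod (Finset.mem_erase.2 ⟨hk, Finset.mem_univ k⟩) (zeroAt_Q (a k))
      (fun j _ => differentiable_Q (a j) (a k))
  have hZM : ∀ (i : Fin gg) (k : Fin (gg + 1)), k ≠ i.succ → ZeroAt (M i) (a k) :=
    fun i k hk => zeroAt_sq (hZP i k hk).1 (hPdiff i (a k)) _
  let d : Fin gg → ((Fin n → Fin n → ℝ) →L[ℝ] ℝ) := fun i => fderiv ℝ (M i) (Bv i)
  let N : Fin gg → (Fin n → Fin n → ℝ) → ℝ :=
    fun i x => M i x * (1 - (d i x - d i (Bv i)))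
  have hgdiff : ∀ (i : Fin gg) (y), DifferentiableAt ℝ (fun x => 1 - (d i x - d i (Bv i))) y :=
    fun i y => ((d i).differentiable.differentiableAt.sub_const _).const_sub 1
  have hNdiff : ∀ i y, DifferentiableAt ℝ (N i) y := fun i y =>
    (hMdiff i y).mul (hgdiff i y)
  have hN1 : ∀ i, N i (Bv i) = 1 := fun i => by
    simp only [N, hM1 i]; ring
  have hNder : ∀ i, HasFDerivAt (N i) (0 : (Fin n → Fin n → ℝ) →L[ℝ] ℝ) (Bv i) := by
    intro i
    have hM : HasFDerivAt (M i) (d i) (Bv i) := (hMdiff i (Bv i)).hasFDerivAt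
    have hg : HasFDerivAt (fun x => 1 - (d i x - d i (Bv i))) (-(d i)) (Bv i) := by
      have := ((d i).hasFDerivAt (x := Bv i)).sub_const (d i (Bv i))
      simpa using this.const_sub 1
    have := hM.fun_mul hg
    simpa [hM1 i] using this
  have hZN : ∀ (i : Fin gg) (k : Fin (gg + 1)), k ≠ i.succ → ZeroAt (N i) (a k) :=
    fun i k hk => (hZM i k hk).mul (hgdiff i (a k))
  let G : Fin gg → ((Fin n → Fin n → ℝ) →L[ℝ] ℝ) := fun i => fderiv ℝ ζ (Bv i)
  let ψ : (Fin n → Fin n → ℝ) → ℝ :=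
    fun x => ∑ i : Fin gg, N i x * (G i x - G i (Bv i))
  have hval : ∀ k : Fin (gg + 1), ψ (a k) = 0 := by
    intro k
    refine Finset.sum_eq_zero fun i _ => ?_
    by_cases h : k = i.succ
    · subst h; rw [has i]; simp
    · rw [(hZN i k h).1]; ring
  have hder : ∀ i : Fin gg, HasFDerivAt ψ (G i) (Bv i) := by
    intro i
    have hterm : ∀ k : Fin gg, HasFDerivAt (fun x => N k x * (G k x - G k (Bv k)))
        (if k = i then G i else 0) (Bv i) := by
      intro k
      by_cases h : k = i
      · subst h
        have h2 : HasFDerivAt (fun x => G k x - G k (Bv k)) (G k) (Bv k) :=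
          ((G k).hasFDerivAt (x := Bv k)).sub_const _
        have := (hNder k).fun_mul h2
        simpa [hN1 k] using this
      · have hne : Fin.succ i ≠ Fin.succ k := fun hcon =>
          h ((Fin.succ_injective gg hcon).symm)
        have hZ := hZN k i.succ hne
        rw [has i] at hZ
        have := hZ.mul ((G k).differentiable.differentiableAt.sub_const (G k (Bv k)))
        simpa [if_neg h] using this.2
    have := HasFDerivAt.fun_sum (u := Finset.univ) fun k _ => hterm k
    simpa using this
  have hpoly : IsPolyFun ψ := by
    refine IsPolyFun.sum _ _ fun i _ => ?_
    refine IsPolyFun.mul (IsPolyFun.mul ?_ ?_) ?_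
    · have hP : IsPolyFun (P i) := IsPolyFun.prod _ _ fun j _ => isPolyFun_Q (a j)
      have h1 : IsPolyFun (fun x => (c i)⁻¹ * P i x) := (IsPolyFun.const _).mul hP
      show IsPolyFun (fun x => ((c i)⁻¹ * P i x) ^ 2)
      simp only [pow_two]
      exact h1.mul h1
    · exact (IsPolyFun.const 1).sub ((IsPolyFun.clm (d i)).sub (IsPolyFun.const _))
    · exact (IsPolyFun.clm (G i)).sub (IsPolyFun.const _)
  refine ⟨ψ, hpoly, ?_, ?_, ?_⟩
  · intro i
    rw [← has i, hval i.succ, ← ha0, hval 0]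
  · intro i
    rw [(hder i).fderiv]
  · intro i
    rw [(hder i).fderiv, hstat i]
    exact sub_self _
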